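/- Let k ∈ ℕ with k ≥ 1, let z = (z₁,…,z_k) ∈ ℝ^k with z₁ < … < z_k, let α = (α₁,…,α_k) ∈ ℝ^k and let ν ∈ (0, ρ_{z,α}). Then the function G_{z,α,ν} : ℝ → ℝ is differentiable on ℝ and satisfies 0 < inf_{x∈ℝ} G_{z,α,ν}'(x) ≤ sup_{x∈ℝ} G_{z,α,ν}'(x) < ∞. In particular, G_{z,α,ν} is strictly increasing, Lipschitz continuous, a bijection of ℝ onto ℝ, and its inverse function G_{z,α,ν}^{−1} : ℝ → ℝ is Lipschitz continuous as well. -/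

import Mathlib

lemma hasDerivAt_mul_abs (x : ℝ) : HasDerivAt (fun y : ℝ => y * |y|) (2 * |x|) x := by
  rcases lt_trichotomy x 0 with hx | hx | hx
  · have h : (fun y : ℝ => -(y * y)) =ᶠ[nhds x] (fun y : ℝ => y * |y|) := by
      filter_upwards [Iio_mem_nhds hx] with y (hy : y < 0)
      rw [abs_of_neg hy]; ring
    have h2 : HasDerivAt (fun y : ℝ => -(y * y)) (2 * |x|) x := by
      refine ((hasDerivAt_id x).mul (hasDerivAt_id x)).neg.congr_deriv ?_
      simp [abs_of_neg hx]; ring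
    exact h2.congr_of_eventuallyEq h.symm
  · subst hx
    rw [hasDerivAt_iff_isLittleO]
    simp only [mul_zero, abs_zero, zero_mul, sub_zero, smul_eq_mul]
    rw [Asymptotics.isLittleO_iff]
    intro ε hε
    filter_upwards [Metric.ball_mem_nhds 0 hε] with y hy
    simp only [Metric.mem_ball, Real.dist_eq, sub_zero] at hy
    have hh : ‖y * |y|‖ = |y| * |y| := by rw [Real.norm_eq_abs, abs_mul, abs_abs]
    rw [hh, Real.norm_eq_abs]
    nlinarith [abs_nonneg y]
  · have h : (fun y : ℝ => y * y) =ᶠ[nhds x] (fun y : ℝ => y * |y|) := by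
      filter_upwards [Ioi_mem_nhds hx] with y (hy : 0 < y)
      rw [abs_of_pos hy]
    have h2 : HasDerivAt (fun y : ℝ => y * y) (2 * |x|) x := by
      refine ((hasDerivAt_id x).mul (hasDerivAt_id x)).congr_deriv ?_
      simp [abs_of_pos hx]; ring
    exact h2.congr_of_eventuallyEq h.symm

noncomputable def pp (y : ℝ) : ℝ := (y ^ 2 + y * |y|) / 2

lemma pp_of_nonneg {y : ℝ} (hy : 0 ≤ y) : pp y = y ^ 2 := by
  simp [pp, abs_of_nonneg hy]; ring

lemma pp_of_nonpos {y : ℝ} (hy : y ≤ 0) : pp y = 0 := by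
  simp [pp, abs_of_nonpos hy]; ring

lemma hasDerivAt_pp (y : ℝ) : HasDerivAt pp (y + |y|) y := by
  have h := ((hasDerivAt_pow 2 y).add (hasDerivAt_mul_abs y)).div_const 2
  refine h.congr_deriv ?_
  push_cast; ring

/-- The bump function `φ(x) = (1 - x²)⁴ · 1_{[-1,1]}(x)`. -/
noncomputable def phi (x : ℝ) : ℝ := if x ∈ Set.Icc (-1 : ℝ) 1 then (1 - x ^ 2) ^ 4 else 0

/-- The transformation `G_{z,α,ν}(x) = x + Σ_{i=1}^k α_i (x - z_i)|x - z_i| φ((x - z_i)/ν)`. -/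
noncomputable def Gfun (k : ℕ) (z α : Fin k → ℝ) (ν : ℝ) (x : ℝ) : ℝ :=
  x + ∑ i : Fin k, α i * (x - z i) * |x - z i| * phi ((x - z i) / ν)

lemma phi_eq (t : ℝ) : phi t = (pp (1 - t ^ 2)) ^ 2 := by
  unfold phi
  by_cases h : t ∈ Set.Icc (-1 : ℝ) 1
  · obtain ⟨h1, h2⟩ := h
    have : (0:ℝ) ≤ 1 - t ^ 2 := by nlinarith
    rw [if_pos ⟨h1, h2⟩, pp_of_nonneg this]; ring
  · rw [if_neg h]
    have ht : 1 < |t| := by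
      by_contra hc
      push_neg at hc
      exact h ⟨neg_le_of_abs_le hc, le_of_abs_le hc⟩
    have : 1 - t ^ 2 ≤ 0 := by nlinarith [sq_abs t]
    rw [pp_of_nonpos this]; ring

noncomputable def Ffun (ν u : ℝ) : ℝ := u * |u| * (pp (1 - (u / ν) ^ 2)) ^ 2

noncomputable def Dfun (ν u : ℝ) : ℝ :=
  2 * |u| * (pp (1 - (u / ν) ^ 2)) ^ 2 +
    u * |u| * (2 * pp (1 - (u / ν) ^ 2) *
      (((1 - (u / ν) ^ 2) + |1 - (u / ν) ^ 2|) * (-(2 * u) / ν ^ 2)))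

lemma hasDerivAt_F {ν : ℝ} (hν : ν ≠ 0) (u : ℝ) : HasDerivAt (Ffun ν) (Dfun ν u) u := by
  have hg : HasDerivAt (fun u : ℝ => 1 - (u / ν) ^ 2) (-(2 * u) / ν ^ 2) u := by
    have := (((hasDerivAt_id u).div_const ν).pow 2).const_sub 1
    refine this.congr_deriv ?_
    simp only [id_eq]
    field_simp
    rw [show (2:ℕ) - 1 = 1 from rfl, pow_one]; push_cast
    rw [mul_assoc, show ν * (u / ν) = u by field_simp]; ring
  have hpg : HasDerivAt (fun u : ℝ => pp (1 - (u / ν) ^ 2))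
      (((1 - (u / ν) ^ 2) + |1 - (u / ν) ^ 2|) * (-(2 * u) / ν ^ 2)) u :=
    (hasDerivAt_pp _).comp u hg
  have hpg2 : HasDerivAt (fun u : ℝ => (pp (1 - (u / ν) ^ 2)) ^ 2)
      (2 * pp (1 - (u / ν) ^ 2) *
        (((1 - (u / ν) ^ 2) + |1 - (u / ν) ^ 2|) * (-(2 * u) / ν ^ 2))) u := by
    have := hpg.pow 2
    refine this.congr_deriv ?_
    push_cast; ring
  have := (hasDerivAt_mul_abs u).mul hpg2
  exact this

lemma Dfun_eq_zero {ν u : ℝ} (hν : 0 < ν) (h : ν ≤ |u|) : Dfun ν u = 0 := by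
  have h1 : 1 ≤ |u / ν| := by
    rw [abs_div, abs_of_pos hν, le_div_iff₀ hν]
    simpa using h
  have h2 : 1 - (u / ν) ^ 2 ≤ 0 := by nlinarith [sq_abs (u / ν)]
  rw [Dfun, pp_of_nonpos h2]
  ring

lemma abs_Dfun_le {ν u : ℝ} (hν : 0 < ν) : |Dfun ν u| ≤ 8 * ν := by
  rcases le_or_gt ν |u| with h | h
  · rw [Dfun_eq_zero hν h, abs_zero]; positivity
  · have hs : 0 ≤ 1 - (u / ν) ^ 2 := by
      have : |u / ν| ≤ 1 := by
        rw [abs_div, abs_of_pos hν, div_le_one hν]; exact h.le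
      nlinarith [sq_abs (u / ν), mul_le_mul this this (abs_nonneg _) zero_le_one]
    have hs1 : (u / ν) ^ 2 ≤ 1 := by linarith
    have hD : Dfun ν u = 2 * |u| * (1 - (u/ν)^2)^3 * (1 - 5 * (u/ν)^2) := by
      rw [Dfun, pp_of_nonneg hs, abs_of_nonneg hs]
      field_simp
      ring
    rw [hD]
    have h2 : |1 - 5 * (u/ν)^2| ≤ 4 := by
      rw [abs_le]; constructor <;> nlinarith [sq_nonneg (u/ν)]
    have h3 : |(1 - (u/ν)^2)^3| ≤ 1 := by
      rw [abs_pow]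
      have : |1 - (u/ν)^2| ≤ 1 := by
        rw [abs_le]; constructor <;> nlinarith [sq_nonneg (u/ν)]
      calc |1 - (u/ν)^2| ^ 3 ≤ 1 ^ 3 := pow_le_pow_left₀ (abs_nonneg _) this 3
        _ = 1 := one_pow 3
    rw [abs_mul, abs_mul, abs_mul, abs_abs]
    have h4 : |u| ≤ ν := h.le
    have h5 : |(2:ℝ)| = 2 := by norm_num
    rw [h5]
    have key : |u| * |(1 - (u/ν)^2)^3| * |1 - 5*(u/ν)^2| ≤ ν * 1 * 4 :=
      mul_le_mul (mul_le_mul h4 h3 (abs_nonneg _) hν.le) h2 (abs_nonneg _)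
        (by positivity)
    linarith

lemma Gfun_eq (k : ℕ) (z α : Fin k → ℝ) (ν : ℝ) :
    Gfun k z α ν = fun x => x + ∑ i : Fin k, α i * Ffun ν (x - z i) := by
  funext x
  unfold Gfun Ffun
  congr 1
  refine Finset.sum_congr rfl fun i _ => ?_
  rw [phi_eq]
  ring

lemma hasDerivAt_G (k : ℕ) (z α : Fin k → ℝ) {ν : ℝ} (hν : ν ≠ 0) (x : ℝ) :
    HasDerivAt (Gfun k z α ν) (1 + ∑ i : Fin k, α i * Dfun ν (x - z i)) x := by
  rw [Gfun_eq]
  have hsum : HasDerivAt (fun x => ∑ i : Fin k, α i * Ffun ν (x - z i))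
      (∑ i : Fin k, α i * Dfun ν (x - z i)) x := by
    refine HasDerivAt.fun_sum fun i _ => ?_
    have h1 : HasDerivAt (fun x : ℝ => x - z i) 1 x := (hasDerivAt_id x).sub_const (z i)
    have h2 := (hasDerivAt_F hν (x - z i)).comp x h1
    have h3 := h2.const_mul (α i)
    simpa using h3
  exact (hasDerivAt_id' x).add hsum

/-- For `k ≥ 1`, `z₁ < … < z_k`, `α ∈ ℝ^k` and `ν ∈ (0, ρ_{z,α})`
(the condition `ν ∈ (0, ρ_{z,α})` being expressed by `0 < ν`, `ν · 8|α_i| < 1` for all `i`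
— which encodes `ν < 1/(8|α_i|)` with the convention `1/0 = ∞` — and
`ν < (z_{i+1} - z_i)/2` for consecutive indices), the function `G_{z,α,ν}` is
differentiable with `0 < inf G' ≤ sup G' < ∞`; in particular it is strictly increasing,
Lipschitz continuous, a bijection of `ℝ`, with Lipschitz continuous inverse. -/
theorem stmt_2 (k : ℕ) (hk : 1 ≤ k) (z α : Fin k → ℝ) (hz : StrictMono z)
    (ν : ℝ) (hν0 : 0 < ν)
    (hν1 : ∀ i : Fin k, ν * (8 * |α i|) < 1)
    (hν2 : ∀ i j : Fin k, (i : ℕ) + 1 = (j : ℕ) → ν < (z j - z i) / 2) :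
    (∀ x : ℝ, DifferentiableAt ℝ (Gfun k z α ν) x) ∧
    (∃ m M : ℝ, 0 < m ∧ (∀ x : ℝ, m ≤ deriv (Gfun k z α ν) x) ∧
      (∀ x : ℝ, deriv (Gfun k z α ν) x ≤ M)) ∧
    StrictMono (Gfun k z α ν) ∧
    (∃ K : NNReal, LipschitzWith K (Gfun k z α ν)) ∧
    Function.Bijective (Gfun k z α ν) ∧
    (∃ K' : NNReal, LipschitzWith K' (Function.invFun (Gfun k z α ν))) := by
  set G := Gfun k z α ν with hG
  have hνne : ν ≠ 0 := hν0.ne'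
  -- separation of the z's
  have sep : ∀ i j : Fin k, i < j → 2 * ν < z j - z i := by
    intro i j hij
    have hik : (i : ℕ) + 1 < k := lt_of_le_of_lt (Nat.succ_le_of_lt hij) j.isLt
    set i' : Fin k := ⟨(i : ℕ) + 1, hik⟩ with hi'
    have h1 := hν2 i i' rfl
    have h2 : z i' ≤ z j := hz.monotone (by
      show ((i : ℕ) + 1 : ℕ) ≤ (j : ℕ)
      exact Nat.succ_le_of_lt hij)
    linarith
  -- the constant c
  have hne : (Finset.univ : Finset (Fin k)).Nonempty := ⟨⟨0, hk⟩, Finset.mem_univ _⟩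
  set c : ℝ := Finset.univ.sup' hne (fun i => ν * (8 * |α i|)) with hc
  have hc1 : c < 1 := (Finset.sup'_lt_iff hne).2 fun i _ => hν1 i
  have hci : ∀ i : Fin k, ν * (8 * |α i|) ≤ c := fun i => by rw [hc]; exact Finset.le_sup' (fun i => ν * (8 * |α i|)) (Finset.mem_univ i)
  have hc0 : 0 ≤ c := le_trans (by positivity) (hci ⟨0, hk⟩)
  -- bound on the sum
  have hsum : ∀ x : ℝ, |∑ i : Fin k, α i * Dfun ν (x - z i)| ≤ c := by
    intro x
    set S : Fin k → ℝ := fun i => α i * Dfun ν (x - z i) with hS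
    have hclose : ∀ i, S i ≠ 0 → |x - z i| < ν := by
      intro i hi
      by_contra hcl
      push_neg at hcl
      exact hi (by rw [hS]; simp [Dfun_eq_zero hν0 hcl])
    have habs : ∀ i, |S i| ≤ c := by
      intro i
      calc |S i| = |α i| * |Dfun ν (x - z i)| := by rw [hS]; exact abs_mul _ _
        _ ≤ |α i| * (8 * ν) := by
            exact mul_le_mul_of_nonneg_left (abs_Dfun_le hν0) (abs_nonneg _)
        _ = ν * (8 * |α i|) := by ring
        _ ≤ c := hci i
    by_cases hex : ∃ i, S i ≠ 0
    · obtain ⟨i₀, hi₀⟩ := hex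
      have : ∑ i : Fin k, S i = S i₀ := by
        refine Finset.sum_eq_single i₀ (fun j _ hj => ?_) (fun h => absurd (Finset.mem_univ i₀) h)
        by_contra hj0
        have hji : |x - z j| < ν := hclose j hj0
        have hii : |x - z i₀| < ν := hclose i₀ hi₀
        rcases lt_or_gt_of_ne hj with h' | h'
        · have := sep j i₀ h'
          have := abs_sub_abs_le_abs_sub (x - z j) (x - z i₀)
          have h5 : |z i₀ - z j| ≤ |x - z j| + |x - z i₀| := by
            calc |z i₀ - z j| = |(x - z j) - (x - z i₀)| := by ring_nf
              _ ≤ |x - z j| + |x - z i₀| := abs_sub _ _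
          rw [abs_of_pos (by linarith : (0:ℝ) < z i₀ - z j)] at h5
          linarith
        · have := sep i₀ j h'
          have h5 : |z j - z i₀| ≤ |x - z i₀| + |x - z j| := by
            calc |z j - z i₀| = |(x - z i₀) - (x - z j)| := by ring_nf
              _ ≤ |x - z i₀| + |x - z j| := abs_sub _ _
          rw [abs_of_pos (by linarith : (0:ℝ) < z j - z i₀)] at h5
          linarith
      rw [this]
      exact habs i₀
    · push_neg at hex
      have : ∑ i : Fin k, S i = 0 := Finset.sum_eq_zero fun i _ => hex i
      rw [this, abs_zero]
      exact hc0
  -- derivative facts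
  have hder : ∀ x : ℝ, HasDerivAt G (1 + ∑ i : Fin k, α i * Dfun ν (x - z i)) x :=
    fun x => hasDerivAt_G k z α hνne x
  have hdiff : Differentiable ℝ G := fun x => (hder x).differentiableAt
  have hderiv : ∀ x : ℝ, deriv G x = 1 + ∑ i : Fin k, α i * Dfun ν (x - z i) :=
    fun x => (hder x).deriv
  have hlow : ∀ x : ℝ, 1 - c ≤ deriv G x := by
    intro x
    rw [hderiv x]
    have := (abs_le.1 (hsum x)).1
    linarith
  have hup : ∀ x : ℝ, deriv G x ≤ 1 + c := by
    intro x
    rw [hderiv x]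
    have := (abs_le.1 (hsum x)).2
    linarith
  have hm : (0:ℝ) < 1 - c := by linarith
  -- strict mono
  have hmono : StrictMono G := strictMono_of_deriv_pos fun x => lt_of_lt_of_le hm (hlow x)
  -- Lipschitz
  have hlip : LipschitzWith (1 + c).toNNReal G := by
    refine lipschitzWith_of_nnnorm_deriv_le hdiff fun x => ?_
    rw [← norm_toNNReal]
    apply Real.toNNReal_mono
    rw [Real.norm_eq_abs, abs_le]
    exact ⟨by linarith [hlow x], hup x⟩
  -- growth bound
  have hgrow : ∀ ⦃x y : ℝ⦄, x ≤ y → (1 - c) * (y - x) ≤ G y - G x :=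
    mul_sub_le_image_sub_of_le_deriv hdiff hlow
  -- surjective
  have hsurj : Function.Surjective G := by
    intro y
    set b : ℝ := max 0 ((y - G 0) / (1 - c)) with hb
    set a : ℝ := min 0 ((y - G 0) / (1 - c)) with ha
    have hab : a ≤ b := le_trans (min_le_left _ _) (le_max_left _ _)
    have hGb : y ≤ G b := by
      have h1 := hgrow (le_max_left 0 ((y - G 0) / (1 - c)))
      have h2 : (y - G 0) / (1 - c) ≤ b := le_max_right _ _
      have h3 : y - G 0 ≤ (1 - c) * b := by
        rw [div_le_iff₀ hm] at h2; linarith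
      simp only [sub_zero] at h1
      linarith
    have hGa : G a ≤ y := by
      have h1 := hgrow (min_le_left 0 ((y - G 0) / (1 - c)))
      have h2 : a ≤ (y - G 0) / (1 - c) := min_le_right _ _
      have h3 : (1 - c) * a ≤ y - G 0 := by
        rw [le_div_iff₀ hm] at h2; linarith
      linarith
    have := intermediate_value_Icc hab (hdiff.continuous.continuousOn)
    obtain ⟨x, _, hx⟩ := this ⟨hGa, hGb⟩
    exact ⟨x, hx⟩
  have hinj : Function.Injective G := hmono.injective
  -- antilipschitz
  have hanti : AntilipschitzWith (⟨1 - c, hm.le⟩ : NNReal)⁻¹ G := by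
    refine AntilipschitzWith.of_le_mul_dist fun x y => ?_
    rcases le_total x y with hxy | hxy
    · have h1 := hgrow hxy
      rw [Real.dist_eq, Real.dist_eq, abs_of_nonpos (by linarith : x - y ≤ 0),
        abs_of_nonpos (by nlinarith [hmono.monotone hxy] : G x - G y ≤ 0)]
      push_cast
      show -(x - y) ≤ (1 - c)⁻¹ * -(G x - G y)
      have h2 : (1 - c)⁻¹ * ((1 - c) * (y - x)) ≤ (1 - c)⁻¹ * (G y - G x) :=
        mul_le_mul_of_nonneg_left h1 (by positivity)
      rw [inv_mul_cancel_left₀ hm.ne'] at h2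
      have h3 : (1 - c)⁻¹ * -(G x - G y) = (1 - c)⁻¹ * (G y - G x) := by ring
      rw [h3]
      linarith
    · have h1 := hgrow hxy
      rw [Real.dist_eq, Real.dist_eq, abs_of_nonneg (by linarith : 0 ≤ x - y),
        abs_of_nonneg (by nlinarith [hmono.monotone hxy] : 0 ≤ G x - G y)]
      push_cast
      show x - y ≤ (1 - c)⁻¹ * (G x - G y)
      have h2 : (1 - c)⁻¹ * ((1 - c) * (x - y)) ≤ (1 - c)⁻¹ * (G x - G y) :=
        mul_le_mul_of_nonneg_left h1 (by positivity)
      rw [inv_mul_cancel_left₀ hm.ne'] at h2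
      linarith
  have hinvlip : LipschitzWith (⟨1 - c, hm.le⟩ : NNReal)⁻¹ (Function.invFun G) :=
    hanti.to_rightInverse (Function.rightInverse_invFun hsurj)
  exact ⟨fun x => hdiff x, ⟨1 - c, 1 + c, hm, hlow, hup⟩, hmono,
    ⟨_, hlip⟩, ⟨hinj, hsurj⟩, ⟨_, hinvlip⟩⟩
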